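/- Let (P, a) be a strict algebra for the existential-completion monad: a : P^∃ → P is a natural transformation over the identity functor with a_A ∘ ι_A = id_{P(A)} for all A. Then for every projection f : A → B, the map ∃_f(α) := a_B(f, α) is left adjoint to P_f: ∃_f(α) ≤ β iff α ≤ P_f(β). -/

import Mathlib

open CategoryTheory Limits

universe w v u

/-- A primary doctrine: a contravariant assignment of inf-semilattices with top
to objects of `C`, functorial and meet/top-preserving on morphisms. -/
structure PrimaryDoctrine (C : Type u) [Category.{v} C] where
  P : C → Type w
  [instInf : ∀ A, SemilatticeInf (P A)]
  [instTop : ∀ A, OrderTop (P A)]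
  map : ∀ {A B : C}, (A ⟶ B) → P B → P A
  map_id : ∀ (A : C) (α : P A), map (𝟙 A) α = α
  map_comp : ∀ {A B D : C} (f : A ⟶ B) (g : B ⟶ D) (α : P D),
    map (f ≫ g) α = map f (map g α)
  map_mono : ∀ {A B : C} (f : A ⟶ B), Monotone (map f)
  map_top : ∀ {A B : C} (f : A ⟶ B), map f ⊤ = ⊤
  map_inf : ∀ {A B : C} (f : A ⟶ B) (α β : P B), map f (α ⊓ β) = map f α ⊓ map f β

attribute [instance] PrimaryDoctrine.instInf PrimaryDoctrine.instTop

/-- A class `Λ` of morphisms containing identities, closed under composition,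
and closed under (chosen) pullbacks along arbitrary morphisms. -/
structure LambdaClass (C : Type u) [Category.{v} C] where
  mem : ∀ {X Y : C}, (X ⟶ Y) → Prop
  id_mem : ∀ X : C, mem (𝟙 X)
  comp_mem : ∀ {X Y Z : C} {f : X ⟶ Y} {g : Y ⟶ Z}, mem f → mem g → mem (f ≫ g)
  pbObj : ∀ {X Y Z : C} (g : X ⟶ Z), mem g → ∀ _f : Y ⟶ Z, C
  pbFst : ∀ {X Y Z : C} (g : X ⟶ Z) (hg : mem g) (f : Y ⟶ Z), pbObj g hg f ⟶ X
  pbSnd : ∀ {X Y Z : C} (g : X ⟶ Z) (hg : mem g) (f : Y ⟶ Z), pbObj g hg f ⟶ Y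
  isPB : ∀ {X Y Z : C} (g : X ⟶ Z) (hg : mem g) (f : Y ⟶ Z),
    IsPullback (pbFst g hg f) (pbSnd g hg f) g f
  pbSnd_mem : ∀ {X Y Z : C} (g : X ⟶ Z) (hg : mem g) (f : Y ⟶ Z), mem (pbSnd g hg f)

variable {C : Type u} [Category.{v} C]

/-- An element of the fibre `P^∃(A)` of the existential completion:
a pair of a morphism `g : B ⟶ A` in `Λ` and `α ∈ P(B)`. -/
structure ExEl (P : PrimaryDoctrine C) (L : LambdaClass C) (A : C) where
  B : C
  g : B ⟶ A
  hg : L.mem g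
  α : P.P B

variable {P : PrimaryDoctrine C} {L : LambdaClass C}

/-- The preorder on `P^∃(A)`. -/
def ExLe {A : C} (x y : ExEl P L A) : Prop :=
  ∃ w : x.B ⟶ y.B, w ≫ y.g = x.g ∧ x.α ≤ P.map w y.α

/-- Equivalence in the preorder `P^∃(A)`. -/
def ExEquiv {A : C} (x y : ExEl P L A) : Prop := ExLe x y ∧ ExLe y x

/-- The top element `(id_A, ⊤_A)` of `P^∃(A)`. -/
def topE (P : PrimaryDoctrine C) (L : LambdaClass C) (A : C) : ExEl P L A :=
  ⟨A, 𝟙 A, L.id_mem A, ⊤⟩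

/-- Reindexing `P^∃_f` along `f : A ⟶ B`, via the chosen pullback. -/
def reindex {A B : C} (f : A ⟶ B) (y : ExEl P L B) : ExEl P L A :=
  ⟨L.pbObj y.g y.hg f, L.pbSnd y.g y.hg f, L.pbSnd_mem y.g y.hg f,
   P.map (L.pbFst y.g y.hg f) y.α⟩

/-- Binary infimum in `P^∃(A)`, constructed via the chosen pullback. -/
def infE {A : C} (x y : ExEl P L A) : ExEl P L A :=
  ⟨L.pbObj x.g x.hg y.g, L.pbFst x.g x.hg y.g ≫ x.g,
   (by rw [(L.isPB x.g x.hg y.g).w]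
       exact L.comp_mem (L.pbSnd_mem x.g x.hg y.g) y.hg),
   P.map (L.pbFst x.g x.hg y.g) x.α ⊓ P.map (L.pbSnd x.g x.hg y.g) y.α⟩

/-- The left adjoint `∃^e_f` along `f ∈ Λ`, given by post-composition. -/
def existE {A B : C} (f : A ⟶ B) (hf : L.mem f) (x : ExEl P L A) : ExEl P L B :=
  ⟨x.B, x.g ≫ f, L.comp_mem x.hg hf, x.α⟩

/-- The unit `ι_A : P(A) → P^∃(A)`, `α ↦ (id_A, α)`. -/
def iota (P : PrimaryDoctrine C) (L : LambdaClass C) (A : C) (α : P.P A) : ExEl P L A :=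
  ⟨A, 𝟙 A, L.id_mem A, α⟩

/-- If `(P, a)` is a strict algebra for the existential-completion monad
(`a : P^∃ → P` monotone, natural over the identity, with `a ∘ ι = id`),
then for every projection `f` (morphism of `Λ`), `∃_f(α) := a_B(f, α)` is
left adjoint to `P_f`. -/
theorem algebra_gives_left_adjoint [HasFiniteProducts C]
    (hproj : ∀ A B : C, L.mem (prod.fst : A ⨯ B ⟶ A))
    (a : ∀ A : C, ExEl P L A → P.P A)
    (hmono : ∀ {A : C} (x y : ExEl P L A), ExLe x y → a A x ≤ a A y)
    (hnat : ∀ {A B : C} (f : A ⟶ B) (x : ExEl P L B),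
      P.map f (a B x) = a A (reindex f x))
    (hunit : ∀ {A : C} (α : P.P A), a A (iota P L A α) = α)
    {A B : C} (f : A ⟶ B) (hf : L.mem f) (α : P.P A) (β : P.P B) :
    a B ⟨A, f, hf, α⟩ ≤ β ↔ α ≤ P.map f β := by
  constructor
  · intro h
    have key : α ≤ a A (reindex f (⟨A, f, hf, α⟩ : ExEl P L B)) := by
      have := hmono (iota P L A α) (reindex f (⟨A, f, hf, α⟩ : ExEl P L B)) ?_
      · rwa [hunit] at this
      · refine ⟨(L.isPB f hf f).lift (𝟙 A) (𝟙 A) (by simp), ?_, ?_⟩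
        · show _ ≫ L.pbSnd f hf f = 𝟙 A
          exact (L.isPB f hf f).lift_snd (𝟙 A) (𝟙 A) (by simp)
        · simp only [reindex, iota, ← P.map_comp]
          rw [(L.isPB f hf f).lift_fst (𝟙 A) (𝟙 A) (by simp), P.map_id]
          exact le_rfl
    calc α ≤ a A (reindex f (⟨A, f, hf, α⟩ : ExEl P L B)) := key
      _ = P.map f (a B ⟨A, f, hf, α⟩) := (hnat f _).symm
      _ ≤ P.map f β := P.map_mono f h
  · intro h
    have h1 : a B (⟨A, f, hf, α⟩ : ExEl P L B) ≤ a B (iota P L B β) := by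
      refine hmono _ _ ⟨f, Category.comp_id f, ?_⟩
      exact le_trans h le_rfl
    rwa [hunit] at h1
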